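/- Let a₁, a₂, b₁, b₂, c be real with a₁ > 0, a₂ > 0, c - a₁ - a₂ > 0 and c - a₂ > 0, and let x, y be real with |x| < 1 and |y| < 1. Then F₃(a₁, a₂; b₁, b₂; c; x, y) = [Γ(c) / (Γ(a₁) Γ(a₂) Γ(c-a₁-a₂))] · ∫_0^1 ∫_0^1 u^{a₁-1} v^{a₂-1} (1-u)^{c-a₂-a₁-1} (1-v)^{c-a₂-1} (1 - y v)^{-b₂} (1 - x u + x u v)^{-b₁} du dv. -/

import Mathlib

open Real intervalIntegral
open MeasureTheory

/-- The Pochhammer symbol `(a)_k = a(a+1)⋯(a+k-1) = Γ(a+k)/Γ(a)`. -/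
noncomputable def poch (a : ℝ) (k : ℕ) : ℝ := ∏ i ∈ Finset.range k, (a + (i : ℝ))

/-- The Beta function `B(x,y) = Γ(x)Γ(y)/Γ(x+y)`. -/
noncomputable def Beta2 (x y : ℝ) : ℝ := Real.Gamma x * Real.Gamma y / Real.Gamma (x + y)

/-- Extended Beta function `B(x,y,z) = Γ(x)Γ(y)Γ(z)/Γ(x+y+z)`. -/
noncomputable def Beta3 (x y z : ℝ) : ℝ :=
  Real.Gamma x * Real.Gamma y * Real.Gamma z / Real.Gamma (x + y + z)

/-- The third Appell hypergeometric function
`F₃(a₁,a₂; b₁,b₂; c; x,y) = Σ_{i,j} (a₁)_i(a₂)_j(b₁)_i(b₂)_j/((c)_{i+j} i! j!) xⁱ yʲ`. -/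
noncomputable def F3 (a₁ a₂ b₁ b₂ c x y : ℝ) : ℝ :=
  ∑' (i : ℕ) (j : ℕ),
    poch a₁ i * poch a₂ j * poch b₁ i * poch b₂ j /
      (poch c (i + j) * (Nat.factorial i : ℝ) * (Nat.factorial j : ℝ)) * x ^ i * y ^ j


lemma poch_zero (a : ℝ) : poch a 0 = 1 := by simp [poch]

lemma poch_succ (a : ℝ) (k : ℕ) : poch a (k + 1) = poch a k * (a + k) := by
  simp [poch, Finset.prod_range_succ]

lemma poch_pos {a : ℝ} (ha : 0 < a) (k : ℕ) : 0 < poch a k := by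
  apply Finset.prod_pos
  intro i _
  positivity

lemma gamma_poch {a : ℝ} (ha : 0 < a) (k : ℕ) :
    Real.Gamma (a + k) = poch a k * Real.Gamma a := by
  induction k with
  | zero => simp [poch_zero]
  | succ n ih =>
      have h1 : a + (n + 1 : ℕ) = (a + n) + 1 := by push_cast; ring
      rw [h1, Real.Gamma_add_one (by positivity), ih, poch_succ]
      ring

/-- Base summability estimate. -/
lemma summable_base (b : ℝ) {t : ℝ} (ht0 : 0 ≤ t) (ht : t < 1) :
    Summable (fun k : ℕ => |poch b k| / (Nat.factorial k : ℝ) * (k + 1) * t ^ k) := by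
  rcases eq_or_lt_of_le ht0 with h0 | h0
  · apply summable_of_ne_finset_zero (s := {0})
    intro k hk
    simp only [Finset.mem_singleton] at hk
    rw [← h0, zero_pow hk, mul_zero]
  · set r : ℝ := (1 + t) / 2 with hr
    have hr1 : r < 1 := by rw [hr]; linarith
    apply summable_of_ratio_norm_eventually_le hr1
    obtain ⟨N, hN⟩ := exists_nat_ge ((3 * (|b| + 1)) / ((1 + t) / 2 - t))
    have hε : (0:ℝ) < (1 + t) / 2 - t := by linarith
    filter_upwards [Filter.eventually_ge_atTop (max N 1)] with k hk
    have hk1 : (1:ℝ) ≤ k := by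
      have : (1:ℕ) ≤ k := le_trans (le_max_right N 1) hk
      exact_mod_cast this
    have hkN : ((3 * (|b| + 1)) / ((1 + t) / 2 - t)) ≤ k := by
      refine le_trans hN ?_
      exact_mod_cast le_trans (le_max_left N 1) hk
    have hkey : (k + |b|) * (k + 2) * t ≤ r * (k + 1) ^ 2 := by
      rw [hr]
      have h2 : 3 * (|b| + 1) ≤ ((1 + t) / 2 - t) * k := by
        rw [div_le_iff₀ hε] at hkN
        linarith [hkN]
      nlinarith [abs_nonneg b, sq_nonneg ((k:ℝ) - 1)]
    -- now the ratio bound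
    have hfac : (Nat.factorial (k + 1) : ℝ) = ((k:ℝ) + 1) * (Nat.factorial k : ℝ) := by
      push_cast [Nat.factorial_succ]; ring
    have habs : |poch b (k + 1)| = |poch b k| * |b + k| := by
      rw [poch_succ, abs_mul]
    have hb : |b + (k:ℝ)| ≤ |b| + k := by
      calc |b + (k:ℝ)| ≤ |b| + |(k:ℝ)| := abs_add_le _ _
      _ = |b| + k := by rw [Nat.abs_cast]
    have e1 : ∀ m : ℕ, ‖|poch b m| / (Nat.factorial m : ℝ) * ((m:ℝ) + 1) * t ^ m‖
        = |poch b m| / (Nat.factorial m : ℝ) * ((m:ℝ) + 1) * t ^ m := fun m =>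
      Real.norm_of_nonneg (by positivity)
    rw [e1, e1]
    have hcast : ((k + 1 : ℕ) : ℝ) = (k:ℝ) + 1 := by push_cast; ring
    rw [hcast]
    have hsplit : |poch b (k+1)| / (Nat.factorial (k+1) : ℝ) * ((k:ℝ) + 1 + 1) * t ^ (k+1)
        = (|poch b k| / (Nat.factorial k : ℝ) * t ^ k) * (|b + k| * ((k:ℝ) + 2) * t / ((k:ℝ) + 1)) := by
      rw [habs, hfac, pow_succ]
      field_simp
      ring
    have hRHS : r * (|poch b k| / (Nat.factorial k : ℝ) * ((k:ℝ) + 1) * t ^ k)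
        = (|poch b k| / (Nat.factorial k : ℝ) * t ^ k) * (r * ((k:ℝ) + 1)) := by ring
    rw [hsplit, hRHS]
    apply mul_le_mul_of_nonneg_left _ (by positivity)
    rw [div_le_iff₀ (by positivity)]
    calc |b + (k:ℝ)| * ((k:ℝ) + 2) * t ≤ (|b| + k) * ((k:ℝ) + 2) * t := by
          apply mul_le_mul_of_nonneg_right _ (le_of_lt h0)
          apply mul_le_mul_of_nonneg_right hb (by positivity)
      _ = ((k:ℝ) + |b|) * ((k:ℝ) + 2) * t := by ring
      _ ≤ r * ((k:ℝ) + 1) ^ 2 := hkey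
      _ = r * ((k:ℝ) + 1) * ((k:ℝ) + 1) := by ring

/-- Summability of the binomial series with a (k+1) factor, in absolute value. -/
lemma summable_abs_binom (b : ℝ) {z : ℝ} (hz : |z| < 1) :
    Summable (fun k : ℕ => |poch b k / (Nat.factorial k : ℝ) * z ^ k|) := by
  apply Summable.of_nonneg_of_le (fun k => abs_nonneg _) _
    (summable_base b (abs_nonneg z) hz)
  intro k
  rw [abs_mul, abs_div, abs_pow, Nat.abs_cast]
  set A := |poch b k| / (Nat.factorial k : ℝ) with hA
  have hA0 : 0 ≤ A := by rw [hA]; positivity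
  calc A * |z| ^ k = A * 1 * |z| ^ k := by ring
    _ ≤ A * ((k:ℝ) + 1) * |z| ^ k := by
        apply mul_le_mul_of_nonneg_right _ (pow_nonneg (abs_nonneg z) k)
        apply mul_le_mul_of_nonneg_left _ hA0
        linarith [Nat.cast_nonneg (α := ℝ) k]

lemma summable_binom (b : ℝ) {z : ℝ} (hz : |z| < 1) :
    Summable (fun k : ℕ => poch b k / (Nat.factorial k : ℝ) * z ^ k) :=
  (summable_abs_binom b hz).of_abs

/-- The binomial series. -/
theorem hasSum_binomial (b : ℝ) {t : ℝ} (ht : |t| < 1) :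
    HasSum (fun k : ℕ => poch b k / (Nat.factorial k : ℝ) * t ^ k) ((1 - t) ^ (-b)) := by
  set c : ℕ → ℝ := fun k => poch b k / (Nat.factorial k : ℝ) with hc
  set s : ℝ := (1 + |t|) / 2 with hs
  have hs0 : 0 < s := by rw [hs]; positivity
  have hs1 : s < 1 := by rw [hs]; linarith
  have hts : |t| < s := by rw [hs]; linarith
  set T : Set ℝ := Set.Ioo (-s) s with hT
  have hmemT : ∀ z ∈ T, |z| < 1 := by
    intro z hz
    rw [abs_lt]
    constructor <;> [linarith [hz.1]; linarith [hz.2]]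
  have htT : t ∈ T := by rw [hT]; constructor <;> [linarith [abs_lt.mp hts |>.1]; exact abs_lt.mp hts |>.2]
  have h0T : (0:ℝ) ∈ T := by rw [hT]; constructor <;> simp [hs0]
  -- summable bound for derivatives on T
  have hu : Summable (fun k : ℕ => |c k| * (k + 1) * s ^ k / s) := by
    apply Summable.div_const
    apply Summable.congr (summable_base b hs0.le hs1)
    intro k
    rw [hc]
    simp only [abs_div, Nat.abs_cast]
  have hderiv : ∀ (k : ℕ) (z : ℝ), HasDerivAt (fun w => c k * w ^ k)
      (c k * ((k:ℝ) * z ^ (k - 1))) z := fun k z => (hasDerivAt_pow k z).const_mul (c k)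
  have hbound : ∀ (k : ℕ) (z : ℝ), z ∈ T → ‖c k * ((k:ℝ) * z ^ (k - 1))‖ ≤ |c k| * (k + 1) * s ^ k / s := by
    intro k z hz
    rw [Real.norm_eq_abs, abs_mul, abs_mul, Nat.abs_cast, abs_pow]
    rcases Nat.eq_zero_or_pos k with rfl | hk
    · simp; positivity
    · have hzs : |z| ≤ s := by
        rw [abs_le]; exact ⟨(hz.1).le, (hz.2).le⟩
      have h1 : |z| ^ (k - 1) ≤ s ^ (k - 1) := pow_le_pow_left₀ (abs_nonneg z) hzs _
      have h2 : s ^ (k - 1) = s ^ k / s := by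
        rw [eq_div_iff hs0.ne', ← pow_succ, Nat.sub_add_cancel hk]
      calc |c k| * ((k:ℝ) * |z| ^ (k-1)) ≤ |c k| * ((k:ℝ) * (s ^ k / s)) := by
            rw [← h2]
            apply mul_le_mul_of_nonneg_left _ (abs_nonneg _)
            exact mul_le_mul_of_nonneg_left h1 (Nat.cast_nonneg k)
        _ ≤ |c k| * ((k:ℝ) + 1) * s ^ k / s := by
            have he : |c k| * ((k:ℝ) + 1) * s ^ k / s = |c k| * (((k:ℝ) + 1) * (s ^ k / s)) := by
              ring
            rw [he]
            apply mul_le_mul_of_nonneg_left _ (abs_nonneg _)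
            apply mul_le_mul_of_nonneg_right _ (by positivity)
            linarith
  have hsum0 : Summable fun k => c k * (0:ℝ) ^ k := by
    apply summable_of_ne_finset_zero (s := {0})
    intro k hk
    simp only [Finset.mem_singleton] at hk
    rw [zero_pow hk, mul_zero]
  -- the sum function and its derivative
  set S : ℝ → ℝ := fun z => ∑' k, c k * z ^ k with hS
  have hDS : ∀ z ∈ T, HasDerivAt S (∑' k, c k * ((k:ℝ) * z ^ (k - 1))) z := by
    intro z hz
    exact hasDerivAt_tsum_of_isPreconnected hu isOpen_Ioo (convex_Ioo _ _).isPreconnected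
      (fun k z _ => hderiv k z) hbound h0T hsum0 hz
  -- recurrence
  have hfacs : ∀ k : ℕ, (Nat.factorial (k+1) : ℝ) = ((k:ℝ) + 1) * (Nat.factorial k : ℝ) := by
    intro k; push_cast [Nat.factorial_succ]; ring
  have hrec : ∀ k : ℕ, c (k+1) * ((k:ℝ) + 1) = c k * (b + k) := by
    intro k
    rw [hc]
    simp only
    rw [poch_succ, hfacs k]
    have h1 : (Nat.factorial k : ℝ) ≠ 0 := by positivity
    have h2 : ((k:ℝ) + 1) ≠ 0 := by positivity
    field_simp
  -- the ODE
  have hode : ∀ z ∈ T, (1 - z) * (∑' k, c k * ((k:ℝ) * z ^ (k - 1))) = b * S z := by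
    intro z hz
    have hz1 : |z| < 1 := hmemT z hz
    have sum1 : Summable (fun k => c k * ((k:ℝ) * z ^ (k - 1))) :=
      Summable.of_norm_bounded hu (fun k => hbound k z hz)
    have sB : Summable (fun k => c k * (k:ℝ) * z ^ k) := by
      apply Summable.of_norm_bounded (summable_base b (abs_nonneg z) hz1)
      intro k
      rw [Real.norm_eq_abs, abs_mul, abs_mul, Nat.abs_cast, abs_pow]
      have h1 : |c k| = |poch b k| / (Nat.factorial k : ℝ) := by
        rw [hc]; simp only [abs_div, Nat.abs_cast]
      rw [h1]
      apply mul_le_mul_of_nonneg_right _ (pow_nonneg (abs_nonneg z) k)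
      apply mul_le_mul_of_nonneg_left _ (by positivity)
      linarith
    have sC : Summable (fun k => b * (c k * z ^ k)) := (summable_binom b hz1).mul_left b
    -- shift the derivative series
    have hshift : (∑' k, c k * ((k:ℝ) * z ^ (k - 1)))
        = ∑' k, c (k+1) * (((k:ℝ) + 1) * z ^ k) := by
      rw [Summable.tsum_eq_zero_add sum1]
      simp only [Nat.cast_zero, zero_mul, mul_zero, zero_add]
      apply tsum_congr
      intro k
      congr 1
      push_cast
      ring_nf
    have hterm : ∀ k : ℕ, c (k+1) * (((k:ℝ) + 1) * z ^ k) = c k * (k:ℝ) * z ^ k + b * (c k * z ^ k) := by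
      intro k
      have : c (k+1) * (((k:ℝ) + 1) * z ^ k) = (c (k+1) * ((k:ℝ) + 1)) * z ^ k := by ring
      rw [this, hrec k]
      ring
    have hD : (∑' k, c k * ((k:ℝ) * z ^ (k - 1)))
        = (∑' k, c k * (k:ℝ) * z ^ k) + b * S z := by
      rw [hshift, tsum_congr hterm, Summable.tsum_add sB sC, hS]
      rw [tsum_mul_left]
    have hzD : z * (∑' k, c k * ((k:ℝ) * z ^ (k - 1))) = ∑' k, c k * (k:ℝ) * z ^ k := by
      rw [← tsum_mul_left]
      apply tsum_congr
      intro k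
      rcases Nat.eq_zero_or_pos k with rfl | hk
      · simp
      · have : z ^ (k - 1) * z = z ^ k := by
          rw [← pow_succ, Nat.sub_add_cancel hk]
        calc z * (c k * ((k:ℝ) * z ^ (k - 1))) = c k * (k:ℝ) * (z ^ (k-1) * z) := by ring
          _ = c k * (k:ℝ) * z ^ k := by rw [this]
    have : (1 - z) * (∑' k, c k * ((k:ℝ) * z ^ (k - 1)))
        = (∑' k, c k * ((k:ℝ) * z ^ (k - 1))) - z * (∑' k, c k * ((k:ℝ) * z ^ (k - 1))) := by
      ring
    rw [this, hzD, hD]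
    ring
  -- the auxiliary function h is constant
  set g : ℝ → ℝ := fun z => S z * (1 - z) ^ b with hg
  have hderivg : ∀ z ∈ T, HasDerivAt g 0 z := by
    intro z hz
    have hz1 : 0 < 1 - z := by
      have := hz.2
      simp only [hT, Set.mem_Ioo] at hz
      linarith [hz.2, hs1]
    have hinner : HasDerivAt (fun w : ℝ => 1 - w) (-1 : ℝ) z := by
      simpa using (hasDerivAt_id z).const_sub 1
    have hpow : HasDerivAt (fun w : ℝ => (1 - w) ^ b) ((-1) * b * (1 - z) ^ (b - 1)) z :=
      hinner.rpow_const (Or.inl hz1.ne')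
    have hmul := (hDS z hz).mul hpow
    have hval : (∑' k, c k * ((k:ℝ) * z ^ (k - 1))) * (1 - z) ^ b
        + S z * ((-1) * b * (1 - z) ^ (b - 1)) = 0 := by
      have hsplit : (1 - z) ^ b = (1 - z) ^ (b - 1) * (1 - z) := by
        rw [Real.rpow_sub hz1, Real.rpow_one]
        field_simp
      rw [hsplit]
      have h3 : (1 - z) * (∑' k, c k * ((k:ℝ) * z ^ (k - 1))) - b * S z = 0 := by
        rw [hode z hz]; ring
      have h2 : (∑' k, c k * ((k:ℝ) * z ^ (k - 1))) * ((1 - z) ^ (b - 1) * (1 - z))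
          + S z * ((-1) * b * (1 - z) ^ (b - 1))
          = (1 - z) ^ (b - 1) * ((1 - z) * (∑' k, c k * ((k:ℝ) * z ^ (k - 1))) - b * S z) := by
        ring
      rw [h2, h3, mul_zero]
    rw [hval] at hmul
    exact hmul
  -- constancy on the interval
  set a₀ : ℝ := min t 0 with ha₀
  set b₀ : ℝ := max t 0 with hb₀
  have hsub : Set.Icc a₀ b₀ ⊆ T := by
    intro x hx
    simp only [hT, Set.mem_Ioo]
    have h1 : -s < a₀ := by
      rw [ha₀]
      apply lt_min htT.1 h0T.1
    have h2 : b₀ < s := by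
      rw [hb₀]
      apply max_lt htT.2 h0T.2
    exact ⟨lt_of_lt_of_le h1 hx.1, lt_of_le_of_lt hx.2 h2⟩
  have hcont : ContinuousOn g (Set.Icc a₀ b₀) := fun x hx =>
    (hderivg x (hsub hx)).continuousAt.continuousWithinAt
  have hd : ∀ x ∈ Set.Ico a₀ b₀, HasDerivWithinAt g 0 (Set.Ici x) x := fun x hx =>
    (hderivg x (hsub ⟨hx.1, hx.2.le⟩)).hasDerivWithinAt
  have key := constant_of_has_deriv_right_zero hcont hd
  have htmem : t ∈ Set.Icc a₀ b₀ := ⟨min_le_left _ _, le_max_left _ _⟩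
  have h0mem : (0:ℝ) ∈ Set.Icc a₀ b₀ := ⟨min_le_right _ _, le_max_right _ _⟩
  have hg_eq : g t = g 0 := by rw [key t htmem, key 0 h0mem]
  have hS0 : S 0 = 1 := by
    rw [hS]
    simp only
    rw [tsum_eq_single 0 (fun k hk => by rw [zero_pow hk, mul_zero])]
    rw [hc]
    simp [poch_zero]
  have hg0 : g 0 = 1 := by
    rw [hg]
    simp only
    rw [hS0, sub_zero, Real.one_rpow, mul_one]
  have htpos : 0 < 1 - t := by
    have := (abs_lt.mp ht).2
    linarith
  have hfin : S t * (1 - t) ^ b = 1 := by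
    have := hg_eq
    rw [hg0] at this
    exact this
  have hSt : S t = (1 - t) ^ (-b) := by
    rw [Real.rpow_neg htpos.le]
    have hne : (1 - t) ^ b ≠ 0 := by
      have : 0 < (1 - t) ^ b := Real.rpow_pos_of_pos htpos b
      exact this.ne'
    field_simp
    linarith [hfin]
  have := (summable_binom b ht).hasSum
  rw [show (∑' k, poch b k / (Nat.factorial k : ℝ) * t ^ k) = S t from rfl, hSt] at this
  exact this


lemma complexfn_eq {p q : ℝ} :
    ∀ t ∈ Set.Icc (0:ℝ) 1,
      (t:ℂ) ^ ((p:ℂ) - 1) * (1 - (t:ℂ)) ^ ((q:ℂ) - 1)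
        = ((t ^ (p-1) * (1-t) ^ (q-1) : ℝ) : ℂ) := by
  intro t ht
  rw [Complex.ofReal_mul, Complex.ofReal_cpow ht.1, Complex.ofReal_cpow (by linarith [ht.2] : (0:ℝ) ≤ 1 - t)]
  push_cast
  ring

lemma integrableOn_beta {p q : ℝ} (hp : 0 < p) (hq : 0 < q) :
    IntegrableOn (fun t : ℝ => t ^ (p-1) * (1-t) ^ (q-1)) (Set.Ioc 0 1) := by
  have hC := (Complex.betaIntegral_convergent (u := (p:ℂ)) (v := (q:ℂ))
    (by simpa using hp) (by simpa using hq)).1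
  have hC2 : IntegrableOn (fun t : ℝ => ((t ^ (p-1) * (1-t) ^ (q-1) : ℝ) : ℂ)) (Set.Ioc 0 1) :=
    hC.congr_fun (fun t ht => complexfn_eq t ⟨ht.1.le, ht.2⟩) measurableSet_Ioc
  have := hC2.re
  apply this.congr
  filter_upwards with t
  simp

lemma betaIntegral_real {p q : ℝ} (hp : 0 < p) (hq : 0 < q) :
    ∫ t in Set.Ioc (0:ℝ) 1, t ^ (p-1) * (1-t) ^ (q-1)
      = Real.Gamma p * Real.Gamma q / Real.Gamma (p+q) := by
  have hkey := Complex.Gamma_mul_Gamma_eq_betaIntegral (s := (p:ℂ)) (t := (q:ℂ))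
    (by simpa using hp) (by simpa using hq)
  have hbeta : Complex.betaIntegral (p:ℂ) (q:ℂ)
      = ((∫ t in (0:ℝ)..1, t ^ (p-1) * (1-t) ^ (q-1) : ℝ) : ℂ) := by
    rw [Complex.betaIntegral]
    rw [intervalIntegral.integral_congr (g := fun t : ℝ => ((t ^ (p-1) * (1-t) ^ (q-1) : ℝ) : ℂ))
      (by rw [Set.uIcc_of_le (by norm_num : (0:ℝ) ≤ 1)]; exact complexfn_eq)]
    exact intervalIntegral.integral_ofReal
  rw [hbeta, ← Complex.ofReal_add, Complex.Gamma_ofReal, Complex.Gamma_ofReal,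
    Complex.Gamma_ofReal, ← Complex.ofReal_mul, ← Complex.ofReal_mul] at hkey
  have h2 := Complex.ofReal_inj.mp hkey
  have h3 : Real.Gamma (p + q) ≠ 0 := (Real.Gamma_pos_of_pos (by linarith)).ne'
  rw [← intervalIntegral.integral_of_le (by norm_num : (0:ℝ) ≤ 1)]
  field_simp
  linarith [h2]

lemma beta_eval {p q : ℝ} (hp : 0 < p) (hq : 0 < q) :
    ∫ t in Set.Ioo (0:ℝ) 1, t ^ (p-1) * (1-t) ^ (q-1) = Beta2 p q := by
  rw [← MeasureTheory.integral_Ioc_eq_integral_Ioo, betaIntegral_real hp hq, Beta2]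

lemma integrableOn_beta_mul {p q : ℝ} (hp : 0 < p) (hq : 0 < q) {g : ℝ → ℝ}
    (hg : ContinuousOn g (Set.Icc 0 1)) :
    IntegrableOn (fun t : ℝ => t ^ (p-1) * (1-t) ^ (q-1) * g t) (Set.Ioo 0 1) := by
  obtain ⟨C, hC⟩ := (isCompact_Icc (a := (0:ℝ)) (b := 1)).exists_bound_of_continuousOn hg
  have hbase : IntegrableOn (fun t : ℝ => t ^ (p-1) * (1-t) ^ (q-1)) (Set.Ioo 0 1) :=
    (integrableOn_beta hp hq).mono_set Set.Ioo_subset_Ioc_self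
  have hmeas : AEStronglyMeasurable (fun t : ℝ => t ^ (p-1) * (1-t) ^ (q-1) * g t)
      (volume.restrict (Set.Ioo 0 1)) := by
    apply ContinuousOn.aestronglyMeasurable _ measurableSet_Ioo
    apply ContinuousOn.mul
    apply ContinuousOn.mul
    · intro t ht
      exact (Real.continuousAt_rpow_const t (p-1) (Or.inl ht.1.ne')).continuousWithinAt
    · intro t ht
      exact (((continuous_const.sub continuous_id).continuousAt (x := t)).rpow_const
        (Or.inl (by simp; linarith [ht.2]))).continuousWithinAt
    · exact hg.mono (fun t ht => ⟨ht.1.le, ht.2.le⟩)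
  apply Integrable.mono' (hbase.const_mul C) hmeas
  filter_upwards [ae_restrict_mem measurableSet_Ioo] with t ht
  have h1 : 0 ≤ t ^ (p-1) := Real.rpow_nonneg ht.1.le _
  have h2 : 0 ≤ (1-t) ^ (q-1) := Real.rpow_nonneg (by linarith [ht.2]) _
  rw [Real.norm_eq_abs, abs_mul, abs_of_nonneg (mul_nonneg h1 h2)]
  calc t ^ (p-1) * (1-t) ^ (q-1) * |g t| ≤ t ^ (p-1) * (1-t) ^ (q-1) * C := by
        apply mul_le_mul_of_nonneg_left _ (mul_nonneg h1 h2)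
        simpa [Real.norm_eq_abs] using hC t ⟨ht.1.le, ht.2.le⟩
    _ = C * (t ^ (p-1) * (1-t) ^ (q-1)) := by ring

/-- Generic interchange of sum and integral over `Ioo 0 1`. -/
lemma interchange_W {W : ℝ → ℝ} (hW : IntegrableOn W (Set.Ioo 0 1) volume)
    (hWnn : ∀ t ∈ Set.Ioo (0:ℝ) 1, 0 ≤ W t)
    {A : ℕ → ℝ} (hA : Summable fun i => |A i|) {φ : ℕ → ℝ → ℝ}
    (hint : ∀ i, IntegrableOn (fun t => W t * (A i * φ i t)) (Set.Ioo 0 1) volume)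
    (hφ : ∀ i, ∀ t ∈ Set.Ioo (0:ℝ) 1, |φ i t| ≤ 1) :
    ∫ t in Set.Ioo (0:ℝ) 1, W t * (∑' i, A i * φ i t)
      = ∑' i, ∫ t in Set.Ioo (0:ℝ) 1, W t * (A i * φ i t) := by
  have hnorm : ∀ i, (∫ t in Set.Ioo (0:ℝ) 1, ‖W t * (A i * φ i t)‖) ≤ |A i| * ∫ t in Set.Ioo (0:ℝ) 1, W t := by
    intro i
    rw [← MeasureTheory.integral_const_mul]
    apply setIntegral_mono_on (hint i).norm (hW.const_mul _) measurableSet_Ioo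
    intro t ht
    rw [Real.norm_eq_abs, abs_mul, abs_mul, abs_of_nonneg (hWnn t ht)]
    calc W t * (|A i| * |φ i t|) ≤ W t * (|A i| * 1) := by
          apply mul_le_mul_of_nonneg_left _ (hWnn t ht)
          exact mul_le_mul_of_nonneg_left (hφ i t ht) (abs_nonneg _)
      _ = |A i| * W t := by ring
  have hsum : Summable fun i => ∫ t in Set.Ioo (0:ℝ) 1, ‖W t * (A i * φ i t)‖ := by
    apply Summable.of_nonneg_of_le (fun i => integral_nonneg (fun t => norm_nonneg _)) hnorm
    exact hA.mul_right _
  have h1 : ∫ t in Set.Ioo (0:ℝ) 1, W t * (∑' i, A i * φ i t)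
      = ∫ t in Set.Ioo (0:ℝ) 1, ∑' i, W t * (A i * φ i t) := by
    apply MeasureTheory.integral_congr_ae
    filter_upwards with t
    exact (tsum_mul_left).symm
  rw [h1, ← MeasureTheory.integral_tsum_of_summable_integral_norm (fun i => hint i) hsum]


/-- Double Euler-type integral representation of the Appell `F₃` function. -/
theorem stmt19 (a₁ a₂ b₁ b₂ c : ℝ) (h1 : 0 < a₁) (h2 : 0 < a₂)
    (h3 : 0 < c - a₁ - a₂) (h4 : 0 < c - a₂)
    (x y : ℝ) (hx : |x| < 1) (hy : |y| < 1) :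
    F3 a₁ a₂ b₁ b₂ c x y
      = (Real.Gamma c / (Real.Gamma a₁ * Real.Gamma a₂ * Real.Gamma (c - a₁ - a₂))) *
          ∫ u in (0:ℝ)..1, ∫ v in (0:ℝ)..1,
            u ^ (a₁ - 1) * v ^ (a₂ - 1) * (1 - u) ^ (c - a₂ - a₁ - 1) *
              (1 - v) ^ (c - a₂ - 1) * (1 - y * v) ^ (-b₂) *
              (1 - x * u + x * u * v) ^ (-b₁) := by
  have hq : 0 < c - a₂ - a₁ := by linarith
  have hcpos : 0 < c := by linarith
  set ψ : ℝ → ℝ := fun v => v ^ (a₂ - 1) * (1 - v) ^ (c - a₂ - 1) * (1 - y*v) ^ (-b₂) with hψ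
  -- positivity of 1 - y*v on [0,1]
  have hyv : ∀ v ∈ Set.Icc (0:ℝ) 1, 0 < 1 - y * v := by
    intro v hv
    have : y * v ≤ |y| := by
      calc y * v ≤ |y * v| := le_abs_self _
        _ = |y| * |v| := abs_mul _ _
        _ ≤ |y| * 1 := by
            apply mul_le_mul_of_nonneg_left _ (abs_nonneg y)
            rw [abs_of_nonneg hv.1]; exact hv.2
        _ = |y| := mul_one _
    linarith
  have hcontg : ContinuousOn (fun v : ℝ => (1 - y*v) ^ (-b₂)) (Set.Icc 0 1) := by
    intro v hv
    apply ContinuousAt.continuousWithinAt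
    exact ((continuous_const.sub (continuous_const.mul continuous_id)).continuousAt).rpow_const
      (Or.inl (hyv v hv).ne')
  have hψint : IntegrableOn ψ (Set.Ioo 0 1) := integrableOn_beta_mul h2 h4 hcontg
  have hψnn : ∀ v ∈ Set.Ioo (0:ℝ) 1, 0 ≤ ψ v := by
    intro v hv
    have h1' : (0:ℝ) ≤ v := hv.1.le
    have h2' : (0:ℝ) ≤ 1 - v := by linarith [hv.2]
    have h3' : (0:ℝ) ≤ 1 - y * v := (hyv v ⟨hv.1.le, hv.2.le⟩).le
    exact mul_nonneg (mul_nonneg (Real.rpow_nonneg h1' _) (Real.rpow_nonneg h2' _))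
      (Real.rpow_nonneg h3' _)
  have hψi : ∀ i : ℕ, IntegrableOn (fun v => ψ v * (1-v)^i) (Set.Ioo 0 1) := by
    intro i
    have := integrableOn_beta_mul h2 h4
      (g := fun v : ℝ => (1 - y*v) ^ (-b₂) * (1-v)^i)
      (hcontg.mul ((continuous_const.sub continuous_id).pow i).continuousOn)
    apply this.congr
    filter_upwards with v
    simp only [hψ]
    ring
  set K : ℕ → ℝ := fun i => ∫ v in Set.Ioo (0:ℝ) 1, ψ v * (1-v)^i with hKdef
  set M : ℝ := ∫ v in Set.Ioo (0:ℝ) 1, ψ v with hMdef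
  have hKbd : ∀ i, |K i| ≤ M := by
    intro i
    calc |K i| = ‖K i‖ := (Real.norm_eq_abs _).symm
      _ ≤ ∫ v in Set.Ioo (0:ℝ) 1, ‖ψ v * (1-v)^i‖ :=
          MeasureTheory.norm_integral_le_integral_norm _
      _ ≤ M := by
          rw [hMdef]
          apply setIntegral_mono_on (hψi i).norm hψint measurableSet_Ioo
          intro v hv
          rw [Real.norm_eq_abs, abs_mul, abs_of_nonneg (hψnn v hv),
            abs_of_nonneg (pow_nonneg (by linarith [hv.2] : (0:ℝ) ≤ 1 - v) i)]
          calc ψ v * (1-v)^i ≤ ψ v * 1 := by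
                apply mul_le_mul_of_nonneg_left _ (hψnn v hv)
                exact pow_le_one₀ (by linarith [hv.2]) (by linarith [hv.1])
            _ = ψ v := mul_one _
  have hMnn : 0 ≤ M := by
    rw [hMdef]
    exact setIntegral_nonneg measurableSet_Ioo hψnn
  -- Step B : value of K i
  have hK : ∀ i : ℕ, K i = ∑' j : ℕ,
      (poch b₂ j / (Nat.factorial j : ℝ) * y^j) * Beta2 (a₂ + (j:ℝ)) (c - a₂ + (i:ℝ)) := by
    intro i
    have hδi : 0 < c - a₂ + (i:ℝ) := by positivity
    have hstep : K i = ∫ v in Set.Ioo (0:ℝ) 1,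
        (v ^ (a₂-1) * (1-v) ^ (c-a₂-1) * (1-v)^i) *
          (∑' j : ℕ, (poch b₂ j / (Nat.factorial j : ℝ) * y^j) * v^j) := by
      rw [hKdef]
      apply setIntegral_congr_fun measurableSet_Ioo
      intro v hv
      have hyv1 : |y * v| < 1 := by
        rw [abs_mul, abs_of_nonneg hv.1.le]
        calc |y| * v ≤ |y| * 1 := mul_le_mul_of_nonneg_left hv.2.le (abs_nonneg y)
          _ = |y| := mul_one _
          _ < 1 := hy
      have hbs := (hasSum_binomial b₂ hyv1).tsum_eq
      have hexp : (1 - y*v) ^ (-b₂) = ∑' j : ℕ,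
          (poch b₂ j / (Nat.factorial j : ℝ) * y^j) * v^j := by
        rw [← hbs]
        apply tsum_congr
        intro j
        rw [mul_pow]
        ring
      simp only [hψ]
      rw [hexp]
      ring
    rw [hstep, interchange_W]
    · apply tsum_congr
      intro j
      have heval : ∫ v in Set.Ioo (0:ℝ) 1,
          (v ^ (a₂-1) * (1-v) ^ (c-a₂-1) * (1-v)^i) *
            ((poch b₂ j / (Nat.factorial j : ℝ) * y^j) * v^j)
          = (poch b₂ j / (Nat.factorial j : ℝ) * y^j) *
            ∫ v in Set.Ioo (0:ℝ) 1, v ^ (a₂ + (j:ℝ) - 1) * (1-v) ^ (c - a₂ + (i:ℝ) - 1) := by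
        rw [← MeasureTheory.integral_const_mul]
        apply setIntegral_congr_fun measurableSet_Ioo
        intro v hv
        have hv1 : (0:ℝ) < v := hv.1
        have hv2 : (0:ℝ) < 1 - v := by linarith [hv.2]
        have e1 : v ^ (a₂-1) * v^j = v ^ (a₂ + (j:ℝ) - 1) := by
          rw [← Real.rpow_natCast v j, ← Real.rpow_add hv1]
          ring_nf
        have e2 : (1-v) ^ (c-a₂-1) * (1-v)^i = (1-v) ^ (c - a₂ + (i:ℝ) - 1) := by
          rw [← Real.rpow_natCast (1-v) i, ← Real.rpow_add hv2]
          ring_nf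
        calc (v ^ (a₂-1) * (1-v) ^ (c-a₂-1) * (1-v)^i) *
              ((poch b₂ j / (Nat.factorial j : ℝ) * y^j) * v^j)
            = (poch b₂ j / (Nat.factorial j : ℝ) * y^j) *
              ((v ^ (a₂-1) * v^j) * ((1-v) ^ (c-a₂-1) * (1-v)^i)) := by ring
          _ = (poch b₂ j / (Nat.factorial j : ℝ) * y^j) *
              (v ^ (a₂ + (j:ℝ) - 1) * (1-v) ^ (c - a₂ + (i:ℝ) - 1)) := by rw [e1, e2]
      rw [heval, beta_eval (by positivity) hδi]
    · exact integrableOn_beta_mul h2 h4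
        (g := fun v : ℝ => (1-v)^i)
        (((continuous_const.sub continuous_id).pow i).continuousOn)
    · intro v hv
      have hv1 : (0:ℝ) ≤ v := hv.1.le
      have hv2 : (0:ℝ) ≤ 1 - v := by linarith [hv.2]
      positivity
    · exact summable_abs_binom b₂ hy
    · intro j
      have := integrableOn_beta_mul h2 h4
        (g := fun v : ℝ => (1-v)^i * ((poch b₂ j / (Nat.factorial j : ℝ) * y^j) * v^j))
        ((((continuous_const.sub continuous_id).pow i).mul
          (continuous_const.mul (continuous_id.pow j))).continuousOn)
      apply this.congr
      filter_upwards with v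
      ring
    · intro j v hv
      rw [abs_pow, abs_of_nonneg hv.1.le]
      exact pow_le_one₀ hv.1.le hv.2.le
  -- Step A : inner integral as a power series in u
  have hJ : ∀ u ∈ Set.Ioo (0:ℝ) 1,
      (∫ v in Set.Ioo (0:ℝ) 1, ψ v * (1 - x*u*(1-v)) ^ (-b₁))
        = ∑' i : ℕ, (poch b₁ i / (Nat.factorial i : ℝ) * x^i * K i) * u^i := by
    intro u hu
    have hxu : |x * u| < 1 := by
      rw [abs_mul, abs_of_nonneg hu.1.le]
      calc |x| * u ≤ |x| * 1 := mul_le_mul_of_nonneg_left hu.2.le (abs_nonneg x)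
        _ = |x| := mul_one _
        _ < 1 := hx
    have hstep : (∫ v in Set.Ioo (0:ℝ) 1, ψ v * (1 - x*u*(1-v)) ^ (-b₁))
        = ∫ v in Set.Ioo (0:ℝ) 1, ψ v *
            (∑' i : ℕ, (poch b₁ i / (Nat.factorial i : ℝ) * (x*u)^i) * (1-v)^i) := by
      apply setIntegral_congr_fun measurableSet_Ioo
      intro v hv
      have hv2 : (0:ℝ) ≤ 1 - v := by linarith [hv.2]
      dsimp only
      have harg : |x*u*(1-v)| < 1 := by
        rw [abs_mul, abs_of_nonneg hv2]
        calc |x*u| * (1-v) ≤ |x*u| * 1 := by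
              apply mul_le_mul_of_nonneg_left _ (abs_nonneg _)
              linarith [hv.1]
          _ = |x*u| := mul_one _
          _ < 1 := hxu
      have hbs := (hasSum_binomial b₁ harg).tsum_eq
      congr 1
      rw [← hbs]
      apply tsum_congr
      intro i
      rw [mul_pow]
      ring
    rw [hstep, interchange_W hψint hψnn (summable_abs_binom b₁ hxu)]
    · apply tsum_congr
      intro i
      have heval : ∫ v in Set.Ioo (0:ℝ) 1,
          ψ v * ((poch b₁ i / (Nat.factorial i : ℝ) * (x*u)^i) * (1-v)^i)
          = (poch b₁ i / (Nat.factorial i : ℝ) * (x*u)^i) *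
            ∫ v in Set.Ioo (0:ℝ) 1, ψ v * (1-v)^i := by
        rw [← MeasureTheory.integral_const_mul]
        apply setIntegral_congr_fun measurableSet_Ioo
        intro v hv
        ring
      have hfold : (∫ v in Set.Ioo (0:ℝ) 1, ψ v * (1-v)^i) = K i := rfl
      rw [heval, hfold, mul_pow]
      ring
    · intro i
      have := integrableOn_beta_mul h2 h4
        (g := fun v : ℝ => (1 - y*v) ^ (-b₂) *
          ((poch b₁ i / (Nat.factorial i : ℝ) * (x*u)^i) * (1-v)^i))
        (hcontg.mul (continuous_const.mul
          ((continuous_const.sub continuous_id).pow i)).continuousOn)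
      apply this.congr
      filter_upwards with v
      simp only [hψ]
      ring
    · intro i v hv
      have hv2 : (0:ℝ) ≤ 1 - v := by linarith [hv.2]
      rw [abs_pow, abs_of_nonneg hv2]
      exact pow_le_one₀ hv2 (by linarith [hv.1])
  -- Step C : outer integral
  have hinner : ∀ u ∈ Set.Ioo (0:ℝ) 1,
      (∫ v in (0:ℝ)..1, u ^ (a₁ - 1) * v ^ (a₂ - 1) * (1 - u) ^ (c - a₂ - a₁ - 1) *
          (1 - v) ^ (c - a₂ - 1) * (1 - y * v) ^ (-b₂) * (1 - x * u + x * u * v) ^ (-b₁))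
        = (u ^ (a₁-1) * (1-u) ^ (c-a₂-a₁-1)) *
            (∑' i : ℕ, (poch b₁ i / (Nat.factorial i : ℝ) * x^i * K i) * u^i) := by
    intro u hu
    rw [← hJ u hu]
    rw [intervalIntegral.integral_of_le zero_le_one, MeasureTheory.integral_Ioc_eq_integral_Ioo,
      ← MeasureTheory.integral_const_mul]
    apply setIntegral_congr_fun measurableSet_Ioo
    intro v hv
    dsimp only
    rw [show 1 - x * u + x * u * v = 1 - x*u*(1-v) by ring]
    simp only [hψ]
    ring
  have hR : (∫ u in (0:ℝ)..1, ∫ v in (0:ℝ)..1,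
        u ^ (a₁ - 1) * v ^ (a₂ - 1) * (1 - u) ^ (c - a₂ - a₁ - 1) *
          (1 - v) ^ (c - a₂ - 1) * (1 - y * v) ^ (-b₂) * (1 - x * u + x * u * v) ^ (-b₁))
      = ∑' i : ℕ, (poch b₁ i / (Nat.factorial i : ℝ) * x^i * K i) *
          Beta2 (a₁ + (i:ℝ)) (c - a₂ - a₁) := by
    rw [intervalIntegral.integral_of_le zero_le_one, MeasureTheory.integral_Ioc_eq_integral_Ioo]
    rw [setIntegral_congr_fun measurableSet_Ioo hinner]
    rw [interchange_W]
    · apply tsum_congr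
      intro i
      have heval : ∫ u in Set.Ioo (0:ℝ) 1,
          (u ^ (a₁-1) * (1-u) ^ (c-a₂-a₁-1)) *
            ((poch b₁ i / (Nat.factorial i : ℝ) * x^i * K i) * u^i)
          = (poch b₁ i / (Nat.factorial i : ℝ) * x^i * K i) *
            ∫ u in Set.Ioo (0:ℝ) 1, u ^ (a₁ + (i:ℝ) - 1) * (1-u) ^ (c - a₂ - a₁ - 1) := by
        have hcg : ∀ u ∈ Set.Ioo (0:ℝ) 1,
            (u ^ (a₁-1) * (1-u) ^ (c-a₂-a₁-1)) *
              ((poch b₁ i / (Nat.factorial i : ℝ) * x^i * K i) * u^i)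
            = (poch b₁ i / (Nat.factorial i : ℝ) * x^i * K i) *
              (u ^ (a₁ + (i:ℝ) - 1) * (1-u) ^ (c-a₂-a₁-1)) := by
          intro u hu
          have hu1 : (0:ℝ) < u := hu.1
          have e1 : u ^ (a₁-1) * u^i = u ^ (a₁ + (i:ℝ) - 1) := by
            rw [← Real.rpow_natCast u i, ← Real.rpow_add hu1]
            ring_nf
          calc (u ^ (a₁-1) * (1-u) ^ (c-a₂-a₁-1)) *
                ((poch b₁ i / (Nat.factorial i : ℝ) * x^i * K i) * u^i)
              = (poch b₁ i / (Nat.factorial i : ℝ) * x^i * K i) *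
                ((u ^ (a₁-1) * u^i) * (1-u) ^ (c-a₂-a₁-1)) := by ring
            _ = (poch b₁ i / (Nat.factorial i : ℝ) * x^i * K i) *
                (u ^ (a₁ + (i:ℝ) - 1) * (1-u) ^ (c-a₂-a₁-1)) := by rw [e1]
        rw [setIntegral_congr_fun measurableSet_Ioo hcg, MeasureTheory.integral_const_mul]
      rw [heval]
      have hBe : ∫ u in Set.Ioo (0:ℝ) 1, u ^ (a₁ + (i:ℝ) - 1) * (1-u) ^ (c - a₂ - a₁ - 1)
          = Beta2 (a₁ + (i:ℝ)) (c - a₂ - a₁) := beta_eval (by positivity) hq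
      rw [hBe]
    · have := integrableOn_beta_mul h1 hq (g := fun _ : ℝ => (1:ℝ)) continuous_const.continuousOn
      apply this.congr
      filter_upwards with u
      ring
    · intro u hu
      have hu1 : (0:ℝ) ≤ u := hu.1.le
      have hu2 : (0:ℝ) ≤ 1 - u := by linarith [hu.2]
      positivity
    · apply Summable.of_nonneg_of_le (fun i => abs_nonneg _) _
        ((summable_abs_binom b₁ hx).mul_right M)
      intro i
      rw [abs_mul]
      exact mul_le_mul_of_nonneg_left (hKbd i) (abs_nonneg _)
    · intro i
      have := integrableOn_beta_mul h1 hq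
        (g := fun u : ℝ => (poch b₁ i / (Nat.factorial i : ℝ) * x^i * K i) * u^i)
        ((continuous_const.mul (continuous_id.pow i)).continuousOn)
      apply this.congr
      filter_upwards with u
      ring
    · intro i u hu
      rw [abs_pow, abs_of_nonneg hu.1.le]
      exact pow_le_one₀ hu.1.le hu.2.le
  rw [hR]
  -- nonvanishing Gammas
  have hG1 : Real.Gamma a₁ ≠ 0 := (Real.Gamma_pos_of_pos h1).ne'
  have hG2 : Real.Gamma a₂ ≠ 0 := (Real.Gamma_pos_of_pos h2).ne'
  have hG4 : Real.Gamma (c - a₂) ≠ 0 := (Real.Gamma_pos_of_pos h4).ne'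
  have hGq : Real.Gamma (c - a₂ - a₁) ≠ 0 := (Real.Gamma_pos_of_pos hq).ne'
  have hGc : Real.Gamma c ≠ 0 := (Real.Gamma_pos_of_pos hcpos).ne'
  -- termwise identity
  have term_eq : ∀ i j : ℕ,
      (Real.Gamma c / (Real.Gamma a₁ * Real.Gamma a₂ * Real.Gamma (c - a₁ - a₂))
          * (poch b₁ i / (Nat.factorial i : ℝ) * x^i)
          * Beta2 (a₁ + (i:ℝ)) (c - a₂ - a₁))
        * (poch b₂ j / (Nat.factorial j : ℝ) * y^j * Beta2 (a₂ + (j:ℝ)) (c - a₂ + (i:ℝ)))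
      = poch a₁ i * poch a₂ j * poch b₁ i * poch b₂ j /
          (poch c (i + j) * (Nat.factorial i : ℝ) * (Nat.factorial j : ℝ)) * x ^ i * y ^ j := by
    intro i j
    rw [Beta2, Beta2]
    rw [show a₁ + (i:ℝ) + (c - a₂ - a₁) = (c - a₂) + (i:ℝ) by ring]
    rw [show a₂ + (j:ℝ) + (c - a₂ + (i:ℝ)) = c + ((i+j:ℕ):ℝ) by push_cast; ring]
    rw [show c - a₁ - a₂ = c - a₂ - a₁ by ring]
    rw [gamma_poch h1 i, gamma_poch h2 j, gamma_poch h4 i, gamma_poch hcpos (i+j)]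
    have hp1 : poch (c - a₂) i ≠ 0 := (poch_pos h4 i).ne'
    have hp2 : poch c (i+j) ≠ 0 := (poch_pos hcpos (i+j)).ne'
    have hf1 : (Nat.factorial i : ℝ) ≠ 0 := by positivity
    have hf2 : (Nat.factorial j : ℝ) ≠ 0 := by positivity
    field_simp
  -- final assembly
  rw [F3, ← tsum_mul_left]
  apply tsum_congr
  intro i
  rw [hK i]
  have hpull : Real.Gamma c / (Real.Gamma a₁ * Real.Gamma a₂ * Real.Gamma (c - a₁ - a₂)) *
        (poch b₁ i / (Nat.factorial i : ℝ) * x^i *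
          (∑' j : ℕ, poch b₂ j / (Nat.factorial j : ℝ) * y^j * Beta2 (a₂ + (j:ℝ)) (c - a₂ + (i:ℝ))) *
          Beta2 (a₁ + (i:ℝ)) (c - a₂ - a₁))
      = ∑' j : ℕ, (Real.Gamma c / (Real.Gamma a₁ * Real.Gamma a₂ * Real.Gamma (c - a₁ - a₂))
          * (poch b₁ i / (Nat.factorial i : ℝ) * x^i)
          * Beta2 (a₁ + (i:ℝ)) (c - a₂ - a₁))
        * (poch b₂ j / (Nat.factorial j : ℝ) * y^j * Beta2 (a₂ + (j:ℝ)) (c - a₂ + (i:ℝ))) := by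
    rw [tsum_mul_left]
    ring
  rw [hpull]
  apply tsum_congr
  intro j
  exact (term_eq i j).symm
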